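/- Homogeneous version with the point at infinity: let q ≥ d(t-1) and let f be a homogeneous polynomial of degree d over F_q in n variables. Define, for polynomials z ∈ F_q[X]_{t-1}, l_β(z) = z(β) for β ∈ F_q and l_∞(z) = the coefficient of X^{t-1} in z. If z₁,...,zₙ ∈ F_q[X]_{t-1} satisfy f(z₁,...,zₙ) ≠ 0, then f(l(z₁),...,l(zₙ)) = 0 for at most d(t-1) of the q+1 maps l ∈ {l_β : β ∈ F_q} ∪ {l_∞}. (Key fact: the coefficient of X^{d(t-1)} in f(z₁,...,zₙ) equals f(l_∞(z₁),...,l_∞(zₙ)).) -/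

import Mathlib

open Polynomial in
lemma my_coeff_prod_bounds {R ι : Type*} [CommSemiring R] (s : Finset ι)
    (p : ι → R[X]) (b : ι → ℕ) (h : ∀ i ∈ s, (p i).natDegree ≤ b i) :
    (∏ i ∈ s, p i).coeff (∑ i ∈ s, b i) = ∏ i ∈ s, (p i).coeff (b i) := by
  induction s using Finset.cons_induction with
  | empty => simp
  | cons a s hns ih =>
    rw [Finset.prod_cons, Finset.sum_cons,
      Polynomial.coeff_mul_add_eq_of_natDegree_le (h a (Finset.mem_cons_self a s))
        ((Polynomial.natDegree_prod_le s p).trans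
          (Finset.sum_le_sum fun i hi => h i (Finset.mem_cons_of_mem hi))),
      ih fun i hi => h i (Finset.mem_cons_of_mem hi), Finset.prod_cons]


open Classical in
/-- Homogeneous version with the point at infinity: let `q ≥ d(t-1)` and let `f` be a
homogeneous polynomial of degree `d` over `F_q` in `n` variables.  For polynomials
`z ∈ F_q[X]_{t-1}` put `l_β(z) = z(β)` for `β ∈ F_q` and `l_∞(z) =` the coefficient of
`X^{t-1}` in `z`.  If `z₁,…,zₙ ∈ F_q[X]_{t-1}` satisfy `f(z₁,…,zₙ) ≠ 0`, then
`f(l(z₁),…,l(zₙ)) = 0` for at most `d(t-1)` of the `q+1` maps `l ∈ {l_β} ∪ {l_∞}`.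
(Key fact: the coefficient of `X^{d(t-1)}` in `f(z₁,…,zₙ)` equals
`f(l_∞(z₁),…,l_∞(zₙ))`.) -/
theorem eval_tester_homogeneous_infty {F : Type*} [Field F] [Fintype F] (n d t : ℕ)
    (ht : 1 ≤ t) (hq : d * (t - 1) ≤ Fintype.card F)
    (f : MvPolynomial (Fin n) F) (hhom : f.IsHomogeneous d)
    (z : Fin n → Polynomial F) (hz : ∀ i, (z i).natDegree ≤ t - 1)
    (hfz : MvPolynomial.aeval z f ≠ 0) :
    ((MvPolynomial.aeval z f).coeff (d * (t - 1)) =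
        MvPolynomial.eval (fun i => (z i).coeff (t - 1)) f) ∧
    (Finset.univ.filter fun β : F =>
        MvPolynomial.eval (fun i => (z i).eval β) f = 0).card +
      (if MvPolynomial.eval (fun i => (z i).coeff (t - 1)) f = 0 then 1 else 0)
      ≤ d * (t - 1) := by
  set P := MvPolynomial.aeval z f with hP
  have hsum : ∀ m ∈ f.support, ∑ i, m i = d := by
    intro m hm
    have h1 := hhom (MvPolynomial.mem_support_iff.mp hm)
    rw [← h1, show (Finsupp.weight 1 : (Fin n →₀ ℕ) →+ ℕ) = Finsupp.weight (fun _ => 1) from rfl,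
      ← Finsupp.degree_eq_weight_one]
    exact (Finset.sum_subset (Finset.subset_univ m.support)
      (fun i _ hi => Finsupp.notMem_support_iff.mp hi)).symm
  have key : P.coeff (d * (t - 1)) =
      MvPolynomial.eval (fun i => (z i).coeff (t - 1)) f := by
    rw [hP, MvPolynomial.aeval_def, MvPolynomial.eval₂_eq', MvPolynomial.eval_eq',
      Polynomial.finset_sum_coeff]
    refine Finset.sum_congr rfl fun m hm => ?_
    rw [Polynomial.algebraMap_eq, Polynomial.coeff_C_mul]
    congr 1
    have : d * (t - 1) = ∑ i, m i * (t - 1) := by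
      rw [← Finset.sum_mul, hsum m hm]
    rw [this, my_coeff_prod_bounds _ _ _
      (fun i _ => (Polynomial.natDegree_pow_le).trans (Nat.mul_le_mul_left _ (hz i)))]
    exact Finset.prod_congr rfl fun i _ =>
      Polynomial.coeff_pow_of_natDegree_le (hz i)
  refine ⟨key, ?_⟩
  have hPdeg : P.natDegree ≤ d * (t - 1) := by
    rw [hP, MvPolynomial.aeval_def, MvPolynomial.eval₂_eq']
    refine Polynomial.natDegree_sum_le_of_forall_le _ _ fun m hm => ?_
    calc ((algebraMap F (Polynomial F)) (MvPolynomial.coeff m f) *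
          ∏ i, z i ^ m i).natDegree
        ≤ (∏ i, z i ^ m i).natDegree := by
          rw [Polynomial.algebraMap_eq]; exact Polynomial.natDegree_C_mul_le _ _
      _ ≤ ∑ i, (z i ^ m i).natDegree := Polynomial.natDegree_prod_le _ _
      _ ≤ ∑ i, m i * (t - 1) := Finset.sum_le_sum fun i _ =>
          (Polynomial.natDegree_pow_le).trans (Nat.mul_le_mul_left _ (hz i))
      _ = d * (t - 1) := by rw [← Finset.sum_mul, hsum m hm]
  have heval : ∀ β : F, P.eval β = MvPolynomial.eval (fun i => (z i).eval β) f := by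
    intro β
    rw [hP, MvPolynomial.aeval_def, MvPolynomial.eval₂_eq', MvPolynomial.eval_eq',
      Polynomial.eval_finset_sum]
    exact Finset.sum_congr rfl fun m hm => by
      rw [Polynomial.algebraMap_eq, Polynomial.eval_mul, Polynomial.eval_C,
        Polynomial.eval_prod]
      exact congrArg _ (Finset.prod_congr rfl fun i _ => by simp)
  have hcard : (Finset.univ.filter fun β : F =>
      MvPolynomial.eval (fun i => (z i).eval β) f = 0).card ≤ P.natDegree := by
    refine le_trans (Finset.card_le_card (t := P.roots.toFinset) ?_)
      ((Multiset.toFinset_card_le _).trans (Polynomial.card_roots' P))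
    intro β hβ
    rw [Finset.mem_filter] at hβ
    rw [Multiset.mem_toFinset, Polynomial.mem_roots hfz]
    exact (heval β).trans hβ.2
  by_cases h0 : MvPolynomial.eval (fun i => (z i).coeff (t - 1)) f = 0
  · rw [if_pos h0]
    have hne : P.natDegree ≠ d * (t - 1) := by
      intro he
      apply Polynomial.leadingCoeff_ne_zero.mpr hfz
      rw [Polynomial.leadingCoeff, he, key, h0]
    have : P.natDegree + 1 ≤ d * (t - 1) := lt_of_le_of_ne hPdeg hne
    omega
  · rw [if_neg h0]
    omega
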